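/- If B is a haplotype matrix explaining a genotype matrix A and i, j are columns such that no row g of A satisfies g[i] = 2 and g[j] = 2, then ind^A(i,j) = ind^B(i,j). -/
import Mathlib


/-- A pair of haplotypes `h`, `h'` explains a genotype `g`:
entries `0`/`1` are copied, and at `2`-entries the haplotypes differ. -/
def ExplainsRow {m : ℕ} (h h' : Fin m → Bool) (g : Fin m → Fin 3) : Prop :=
  ∀ j : Fin m,
    (g j = 0 → h j = false ∧ h' j = false) ∧
    (g j = 1 → h j = true ∧ h' j = true) ∧
    (g j = 2 → h j ≠ h' j)

/-- A `2n × m` haplotype matrix, given by its odd rows `B₁` and even rows `B₂`,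
explains an `n × m` genotype matrix `A`. -/
def Explains {n m : ℕ} (B₁ B₂ : Fin n → Fin m → Bool) (A : Fin n → Fin m → Fin 3) : Prop :=
  ∀ r : Fin n, ExplainsRow (B₁ r) (B₂ r) (A r)

/-- The induced set `ind^B(i,j)` of a haplotype matrix: all pairs `xy` appearing
in columns `i` and `j` in some row of `B`. -/
def indB {n m : ℕ} (B₁ B₂ : Fin n → Fin m → Bool) (i j : Fin m) : Set (Bool × Bool) :=
  {p | ∃ r : Fin n, (B₁ r i = p.1 ∧ B₁ r j = p.2) ∨ (B₂ r i = p.1 ∧ B₂ r j = p.2)}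

/-- The three gamete property: `{01,10,11}` is never a subset of an induced set. -/
def ThreeGamete {n m : ℕ} (B₁ B₂ : Fin n → Fin m → Bool) : Prop :=
  ∀ i j : Fin m,
    ¬ (({(false, true), (true, false), (true, true)} : Set (Bool × Bool)) ⊆ indB B₁ B₂ i j)

/-- The four gamete property: no induced set equals `{00,01,10,11}`. -/
def FourGamete {n m : ℕ} (B₁ B₂ : Fin n → Fin m → Bool) : Prop :=
  ∀ i j : Fin m,
    indB B₁ B₂ i j ≠
      ({(false, false), (false, true), (true, false), (true, true)} : Set (Bool × Bool))

/-- A genotype matrix admits a directed perfect phylogeny if some explaining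
haplotype matrix satisfies the three gamete property. -/
def AdmitsDirectedPP {n m : ℕ} (A : Fin n → Fin m → Fin 3) : Prop :=
  ∃ B₁ B₂ : Fin n → Fin m → Bool, Explains B₁ B₂ A ∧ ThreeGamete B₁ B₂

/-- A genotype matrix admits a perfect phylogeny if some explaining
haplotype matrix satisfies the four gamete property. -/
def AdmitsPP {n m : ℕ} (A : Fin n → Fin m → Fin 3) : Prop :=
  ∃ B₁ B₂ : Fin n → Fin m → Bool, Explains B₁ B₂ A ∧ FourGamete B₁ B₂

/-- Encode a haplotype entry as a genotype entry. -/
def boolToFin3 (b : Bool) : Fin 3 := if b then 1 else 0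

/-- The induced set `ind^A(i,j)` of a genotype matrix. -/
def indA {n m : ℕ} (A : Fin n → Fin m → Fin 3) (i j : Fin m) : Set (Bool × Bool) :=
  {p | ∃ r : Fin n,
    (A r i = boolToFin3 p.1 ∧ A r j = boolToFin3 p.2) ∨
    (A r i = boolToFin3 p.1 ∧ A r j = 2) ∨
    (A r i = 2 ∧ A r j = boolToFin3 p.2)}

lemma fin3_cases (a : Fin 3) : a = 0 ∨ a = 1 ∨ a = 2 := by omega

lemma explains_val {m : ℕ} {h h' : Fin m → Bool} {g : Fin m → Fin 3}
    (he : ExplainsRow h h' g) (k : Fin m) (hk : g k ≠ 2) :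
    g k = boolToFin3 (h k) ∧ g k = boolToFin3 (h' k) := by
  obtain ⟨h0, h1, h2⟩ := he k
  rcases fin3_cases (g k) with e | e | e
  · obtain ⟨a, b⟩ := h0 e; rw [e, a, b]; simp [boolToFin3]
  · obtain ⟨a, b⟩ := h1 e; rw [e, a, b]; simp [boolToFin3]
  · exact absurd e hk

lemma explains_eq {m : ℕ} {h h' : Fin m → Bool} {g : Fin m → Fin 3}
    (he : ExplainsRow h h' g) (k : Fin m) {b : Bool} (hk : g k = boolToFin3 b) :
    h k = b ∧ h' k = b := by
  obtain ⟨h0, h1, h2⟩ := he k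
  cases b
  · exact h0 hk
  · exact h1 hk

/-- If `B` is a haplotype matrix explaining a genotype matrix `A` and `i, j` are
columns such that no row `g` of `A` satisfies `g[i] = 2` and `g[j] = 2`, then
`ind^A(i,j) = ind^B(i,j)`. -/
theorem indA_eq_indB_of_no_double_two {n m : ℕ} (A : Fin n → Fin m → Fin 3)
    (B₁ B₂ : Fin n → Fin m → Bool) (hexp : Explains B₁ B₂ A) (i j : Fin m)
    (hno : ∀ r : Fin n, ¬ (A r i = 2 ∧ A r j = 2)) :
    indA A i j = indB B₁ B₂ i j := by
  ext ⟨x, y⟩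
  simp only [indA, indB, Set.mem_setOf_eq]
  constructor
  · rintro ⟨r, ⟨hi, hj⟩ | ⟨hi, hj⟩ | ⟨hi, hj⟩⟩
    · exact ⟨r, Or.inl ⟨(explains_eq (hexp r) i hi).1, (explains_eq (hexp r) j hj).1⟩⟩
    · obtain ⟨hi1, hi2⟩ := explains_eq (hexp r) i hi
      have hne := ((hexp r) j).2.2 hj
      refine ⟨r, ?_⟩
      by_cases hb : B₁ r j = y
      · exact Or.inl ⟨hi1, hb⟩
      · refine Or.inr ⟨hi2, ?_⟩
        cases hc : B₁ r j <;> cases hd : B₂ r j <;>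
          simp_all
    · obtain ⟨hj1, hj2⟩ := explains_eq (hexp r) j hj
      have hne := ((hexp r) i).2.2 hi
      refine ⟨r, ?_⟩
      by_cases hb : B₁ r i = x
      · exact Or.inl ⟨hb, hj1⟩
      · refine Or.inr ⟨?_, hj2⟩
        cases hc : B₁ r i <;> cases hd : B₂ r i <;>
          simp_all
  · rintro ⟨r, ⟨hi, hj⟩ | ⟨hi, hj⟩⟩ <;> refine ⟨r, ?_⟩ <;>
    · by_cases h2i : A r i = 2
      · have h2j : A r j ≠ 2 := fun h => hno r ⟨h2i, h⟩
        have := explains_val (hexp r) j h2j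
        exact Or.inr (Or.inr ⟨h2i, by rw [← hj]; tauto⟩)
      · have hv := explains_val (hexp r) i h2i
        by_cases h2j : A r j = 2
        · exact Or.inr (Or.inl ⟨by rw [← hi]; tauto, h2j⟩)
        · have hw := explains_val (hexp r) j h2j
          exact Or.inl ⟨by rw [← hi]; tauto, by rw [← hj]; tauto⟩
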